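/- Every graph G has an independence packing: a collection of vertex-disjoint connected critical subgraphs G₁, …, G_k of G such that every vertex of G lies in some G_i and α(G) = α(G₁) + … + α(G_k). -/

import Mathlib

open SimpleGraph

/-- A set of vertices is independent if no two of its members are adjacent. -/
def IsIndepSet {V : Type*} (G : SimpleGraph V) (s : Set V) : Prop :=
  s.Pairwise fun a b => ¬ G.Adj a b

/-- The independence number of a graph: the maximum size of an independent set. -/
noncomputable def alpha {V : Type*} (G : SimpleGraph V) : ℕ :=
  sSup {n | ∃ s : Finset V, _root_.IsIndepSet G (s : Set V) ∧ s.card = n}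

/-- A graph is critical if deleting any edge strictly increases the independence number. -/
def IsCritical {V : Type*} (G : SimpleGraph V) : Prop :=
  ∀ e ∈ G.edgeSet, alpha G < alpha (G.deleteEdges {e})

/-- An independence packing of `H`: a family of pairwise vertex-disjoint connected critical
subgraphs covering all vertices, whose independence numbers sum to `alpha H`. -/
def IsIndepPacking {V : Type*} (H : SimpleGraph V) {k : ℕ} (F : Fin k → H.Subgraph) : Prop :=
  (∀ i j : Fin k, i ≠ j → Disjoint (F i).verts (F j).verts) ∧
  (∀ i : Fin k, (F i).coe.Connected ∧ IsCritical (F i).coe) ∧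
  (⋃ i : Fin k, (F i).verts) = Set.univ ∧
  alpha H = ∑ i : Fin k, alpha (F i).coe

section Helpers

set_option linter.unusedSectionVars false
set_option linter.unusedVariables false

variable {V : Type*} [Fintype V]

lemma indep_mono {G H : SimpleGraph V} (h : G ≤ H) {s : Set V} (hs : _root_.IsIndepSet H s) :
    _root_.IsIndepSet G s := fun a ha b hb hab hadj => hs ha hb hab (h hadj)

lemma alpha_bdd (G : SimpleGraph V) :
    BddAbove {n | ∃ s : Finset V, _root_.IsIndepSet G (s : Set V) ∧ s.card = n} := by
  refine ⟨Fintype.card V, ?_⟩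
  rintro n ⟨s, -, rfl⟩
  exact s.card_le_univ

lemma alpha_exists (G : SimpleGraph V) :
    ∃ s : Finset V, _root_.IsIndepSet G (s : Set V) ∧ s.card = alpha G := by
  have h0 : (0 : ℕ) ∈ {n | ∃ s : Finset V, _root_.IsIndepSet G (s : Set V) ∧ s.card = n} :=
    ⟨∅, by simp [_root_.IsIndepSet], by simp⟩
  exact Nat.sSup_mem ⟨0, h0⟩ (alpha_bdd G)

lemma card_le_alpha {G : SimpleGraph V} {s : Finset V} (hs : _root_.IsIndepSet G (s : Set V)) :
    s.card ≤ alpha G :=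
  le_csSup (alpha_bdd G) ⟨s, hs, rfl⟩

lemma alpha_mono {G H : SimpleGraph V} (h : G ≤ H) : alpha H ≤ alpha G := by
  obtain ⟨s, hs, hcard⟩ := alpha_exists H
  rw [← hcard]
  exact card_le_alpha (indep_mono h hs)

lemma alpha_le_sum {ι : Type*} [Fintype ι] (H : SimpleGraph V) (P : ι → Set V)
    (hdisj : ∀ i j, i ≠ j → Disjoint (P i) (P j)) (hcov : ∀ v, ∃ i, v ∈ P i) :
    alpha H ≤ ∑ i, alpha (H.induce (P i)) := by
  classical
  obtain ⟨s, hs, hcard⟩ := alpha_exists H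
  choose f hf using hcov
  rw [← hcard, Finset.card_eq_sum_card_fiberwise (fun x _ => Finset.mem_univ (f x))]
  refine Finset.sum_le_sum fun i _ => ?_
  haveI : Fintype ↥(P i) := Fintype.ofFinite _
  have hmem : ∀ x ∈ s.filter (fun x => f x = i), x ∈ P i := by
    intro x hx
    obtain ⟨-, rfl⟩ := Finset.mem_filter.mp hx
    exact hf x
  set t : Finset ↥(P i) := (s.filter (fun x => f x = i)).subtype (· ∈ P i) with ht
  have htcard : t.card = (s.filter (fun x => f x = i)).card := by
    rw [ht, Finset.card_subtype, Finset.filter_true_of_mem hmem]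
  rw [← htcard]
  refine card_le_alpha ?_
  intro a ha b hb hab hadj
  rw [Finset.mem_coe, ht, Finset.mem_subtype] at ha hb
  have : ¬ H.Adj ↑a ↑b := hs (Finset.mem_coe.mpr (Finset.mem_of_mem_filter _ ha))
    (Finset.mem_coe.mpr (Finset.mem_of_mem_filter _ hb))
    (fun h => hab (Subtype.ext h))
  exact this (by simpa using hadj)

lemma sum_le_alpha {ι : Type*} [Fintype ι] (H : SimpleGraph V) (P : ι → Set V)
    (hdisj : ∀ i j, i ≠ j → Disjoint (P i) (P j))
    (hcl : ∀ a b, H.Adj a b → ∀ i, a ∈ P i → b ∈ P i) :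
    ∑ i, alpha (H.induce (P i)) ≤ alpha H := by
  classical
  choose t ht hcard using fun i => alpha_exists (H.induce (P i))
  set s : Finset V := Finset.univ.biUnion (fun i => (t i).image Subtype.val) with hsdef
  have hmemP : ∀ i (x : V), x ∈ (t i).image Subtype.val → x ∈ P i := by
    intro i x hx
    obtain ⟨a, -, rfl⟩ := Finset.mem_image.mp hx
    exact a.2
  have hindep : _root_.IsIndepSet H (s : Set V) := by
    intro a ha b hb hab hadj
    simp only [hsdef, Finset.coe_biUnion, Finset.coe_univ, Set.mem_univ, Set.iUnion_true,
      Set.mem_iUnion, Finset.mem_coe] at ha hb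
    obtain ⟨i, hai⟩ := ha
    obtain ⟨j, hbj⟩ := hb
    have hbi : b ∈ P i := hcl a b hadj i (hmemP i a hai)
    have hij : i = j := by
      by_contra hne
      exact (hdisj i j hne).le_bot ⟨hbi, hmemP j b hbj⟩ |>.elim
    subst hij
    obtain ⟨a', ha', rfl⟩ := Finset.mem_image.mp hai
    obtain ⟨b', hb', rfl⟩ := Finset.mem_image.mp hbj
    exact ht i (Finset.mem_coe.mpr ha') (Finset.mem_coe.mpr hb')
      (fun h => hab (congrArg _ h)) (by simpa using hadj)
  have hscard : s.card = ∑ i, alpha (H.induce (P i)) := by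
    rw [hsdef, Finset.card_biUnion]
    · refine Finset.sum_congr rfl fun i _ => ?_
      rw [Finset.card_image_of_injective _ Subtype.val_injective, hcard]
    · intro i _ j _ hij
      rw [Function.onFun, Finset.disjoint_left]
      intro x hxi hxj
      exact (hdisj i j hij).le_bot ⟨hmemP i x hxi, hmemP j x hxj⟩
  rw [← hscard]
  exact card_le_alpha hindep

lemma exists_critical_aux : ∀ (n : ℕ) (G : SimpleGraph V), G.edgeSet.ncard ≤ n →
    ∃ G', G' ≤ G ∧ alpha G' = alpha G ∧ IsCritical G' := by
  intro n
  induction n with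
  | zero =>
    intro G hG
    refine ⟨G, le_rfl, rfl, ?_⟩
    intro e he
    have : G.edgeSet = ∅ := by
      have hfin : G.edgeSet.Finite := Set.toFinite _
      rwa [Nat.le_zero, Set.ncard_eq_zero hfin] at hG
    simp [this] at he
  | succ n ih =>
    intro G hG
    by_cases hc : IsCritical G
    · exact ⟨G, le_rfl, rfl, hc⟩
    · simp only [IsCritical, not_forall] at hc
      obtain ⟨e, he, hlt⟩ := hc
      have hle : G.deleteEdges {e} ≤ G := deleteEdges_le _
      have heq : alpha (G.deleteEdges {e}) = alpha G :=
        le_antisymm (le_of_not_gt hlt) (alpha_mono hle)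
      have hcard : (G.deleteEdges {e}).edgeSet.ncard ≤ n := by
        rw [edgeSet_deleteEdges]
        have h1 : (G.edgeSet \ {e}).ncard < G.edgeSet.ncard := by
          refine Set.ncard_lt_ncard ?_ (Set.toFinite _)
          exact ⟨Set.diff_subset, fun hsub => (hsub he).2 rfl⟩
        omega
      obtain ⟨G', h1, h2, h3⟩ := ih (G.deleteEdges {e}) hcard
      exact ⟨G', h1.trans hle, h2.trans heq, h3⟩

lemma exists_critical (G : SimpleGraph V) :
    ∃ G', G' ≤ G ∧ alpha G' = alpha G ∧ IsCritical G' :=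
  exists_critical_aux G.edgeSet.ncard G le_rfl

omit [Fintype V] in
lemma supp_closed (G' : SimpleGraph V) (c : G'.ConnectedComponent) {a b : V}
    (hadj : G'.Adj a b) (ha : a ∈ c.supp) : b ∈ c.supp := by
  rw [ConnectedComponent.mem_supp_iff] at ha ⊢
  rw [← ha]
  exact ConnectedComponent.sound hadj.symm.reachable

omit [Fintype V] in
lemma reachable_induce_of_walk (G' : SimpleGraph V) (s : Set V)
    (hcl : ∀ a b, G'.Adj a b → a ∈ s → b ∈ s) :
    ∀ {a b : V} (_ : G'.Walk a b) (ha : a ∈ s) (hb : b ∈ s),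
      (G'.induce s).Reachable ⟨a, ha⟩ ⟨b, hb⟩ := by
  intro a b p
  induction p with
  | nil => intro ha hb; exact Reachable.refl _
  | @cons u w b h p ih =>
    intro ha hb
    have hw : w ∈ s := hcl _ _ h ha
    have hadj : (G'.induce s).Adj ⟨u, ha⟩ ⟨w, hw⟩ := by simpa using h
    exact hadj.reachable.trans (ih hw hb)

omit [Fintype V] in
lemma induce_supp_connected (G' : SimpleGraph V) (c : G'.ConnectedComponent) :
    (G'.induce c.supp).Connected := by
  obtain ⟨v, hv⟩ := c.exists_rep
  rw [connected_iff]
  constructor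
  · rintro ⟨a, ha⟩ ⟨b, hb⟩
    have hr : G'.Reachable a b := by
      rw [ConnectedComponent.mem_supp_iff] at ha hb
      exact ConnectedComponent.exact (ha.trans hb.symm)
    obtain ⟨p⟩ := hr
    exact reachable_induce_of_walk G' c.supp (fun x y h hx => supp_closed G' c h hx) p ha hb
  · exact ⟨⟨v, by rw [ConnectedComponent.mem_supp_iff]; exact hv⟩⟩

/-- The subgraph of `G` induced by a connected component of `G' ≤ G`. -/
def compSub (G G' : SimpleGraph V) (hle : G' ≤ G) (c : G'.ConnectedComponent) : G.Subgraph where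
  verts := c.supp
  Adj a b := G'.Adj a b ∧ G'.connectedComponentMk a = c
  adj_sub h := hle h.1
  edge_vert h := (ConnectedComponent.mem_supp_iff _ _).mpr h.2
  symm := ⟨fun a b h => ⟨h.1.symm, (ConnectedComponent.sound h.1.symm.reachable).trans h.2⟩⟩

lemma compSub_coe (G G' : SimpleGraph V) (hle : G' ≤ G) (c : G'.ConnectedComponent) :
    (compSub G G' hle c).coe = G'.induce c.supp := by
  ext ⟨a, ha⟩ ⟨b, hb⟩
  have ha' : G'.connectedComponentMk a = c := (ConnectedComponent.mem_supp_iff _ _).mp ha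
  simp [compSub, ha']

omit [Fintype V] in
lemma supp_disj (G' : SimpleGraph V) :
    ∀ (i j : G'.ConnectedComponent), i ≠ j → Disjoint i.supp j.supp :=
  fun _ _ h => G'.pairwise_disjoint_supp_connectedComponent h

omit [Fintype V] in
lemma supp_cov (G' : SimpleGraph V) : ∀ v, ∃ c : G'.ConnectedComponent, v ∈ c.supp :=
  fun v => ⟨G'.connectedComponentMk v, rfl⟩

lemma alpha_eq_sum_comp (G' : SimpleGraph V) [Fintype G'.ConnectedComponent] :
    alpha G' = ∑ c : G'.ConnectedComponent, alpha (G'.induce c.supp) :=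
  le_antisymm (alpha_le_sum G' _ (supp_disj G') (supp_cov G'))
    (sum_le_alpha G' _ (supp_disj G') (fun a b hadj c ha => supp_closed G' c hadj ha))

omit [Fintype V] in
lemma induce_deleteEdges (G' : SimpleGraph V) (s : Set V) (u v : ↥s) :
    (G'.deleteEdges {s(↑u, ↑v)}).induce s = (G'.induce s).deleteEdges {s(u, v)} := by
  ext a b
  simp only [comap_adj, Function.Embedding.coe_subtype, deleteEdges_adj, Set.mem_singleton_iff,
    Sym2.eq_iff, Subtype.ext_iff]

omit [Fintype V] in
lemma induce_deleteEdges_of_not_mem (G' : SimpleGraph V) (s : Set V) {u v : V}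
    (hu : u ∉ s) (hv : v ∉ s) :
    (G'.deleteEdges {s(u, v)}).induce s = G'.induce s := by
  ext a b
  simp only [comap_adj, Function.Embedding.coe_subtype, deleteEdges_adj, Set.mem_singleton_iff,
    Sym2.eq_iff]
  constructor
  · exact fun h => h.1
  · intro h
    refine ⟨h, ?_⟩
    rintro (⟨rfl, rfl⟩ | ⟨rfl, rfl⟩)
    · exact hu a.2
    · exact hv a.2

lemma crit_comp (G' : SimpleGraph V) [Fintype G'.ConnectedComponent] (hcrit : IsCritical G')
    (c : G'.ConnectedComponent) : IsCritical (G'.induce c.supp) := by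
  classical
  intro ed hed
  induction ed using Sym2.ind with
  | _ u v =>
  rw [mem_edgeSet] at hed
  have huv : G'.Adj ↑u ↑v := by simpa using hed
  have hlt := hcrit s(↑u, ↑v) huv
  set H := G'.deleteEdges {s((u : V), (v : V))} with hH
  have h1 : alpha H ≤ ∑ c' : G'.ConnectedComponent, alpha (H.induce c'.supp) :=
    alpha_le_sum H _ (supp_disj G') (supp_cov G')
  have h2 : ∀ c' : G'.ConnectedComponent, c' ≠ c → H.induce c'.supp = G'.induce c'.supp := by
    intro c' hc'
    refine induce_deleteEdges_of_not_mem G' _ ?_ ?_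
    · intro hu'
      exact (supp_disj G' c' c hc').le_bot ⟨hu', u.2⟩
    · intro hv'
      exact (supp_disj G' c' c hc').le_bot ⟨hv', v.2⟩
  have h3 : H.induce c.supp = (G'.induce c.supp).deleteEdges {s(u, v)} :=
    induce_deleteEdges G' c.supp u v
  have hsumG : alpha G' = alpha (G'.induce c.supp) +
      ∑ c' ∈ Finset.univ.erase c, alpha (G'.induce c'.supp) := by
    rw [alpha_eq_sum_comp G', ← Finset.add_sum_erase _ _ (Finset.mem_univ c)]
  have hsumH : ∑ c' : G'.ConnectedComponent, alpha (H.induce c'.supp)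
      = alpha ((G'.induce c.supp).deleteEdges {s(u, v)}) +
        ∑ c' ∈ Finset.univ.erase c, alpha (G'.induce c'.supp) := by
    rw [← Finset.add_sum_erase _ _ (Finset.mem_univ c), h3]
    congr 1
    exact Finset.sum_congr rfl fun c' hc' => by rw [h2 c' (Finset.ne_of_mem_erase hc')]
  have h4 : alpha G' < alpha ((G'.induce c.supp).deleteEdges {s(u, v)}) +
      ∑ c' ∈ Finset.univ.erase c, alpha (G'.induce c'.supp) := by
    rw [← hsumH]
    exact hlt.trans_le h1
  omega

end Helpers

/-- Every graph has an independence packing. -/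
theorem stmt_6 {V : Type*} [Fintype V] (G : SimpleGraph V) :
    ∃ (k : ℕ) (F : Fin k → G.Subgraph), IsIndepPacking G F := by
  classical
  obtain ⟨G', hle, halpha, hcrit⟩ := exists_critical G
  haveI : Finite G'.ConnectedComponent :=
    Finite.of_surjective G'.connectedComponentMk (fun c => c.exists_rep)
  haveI : Fintype G'.ConnectedComponent := Fintype.ofFinite _
  set k := Fintype.card G'.ConnectedComponent with hk
  let e : Fin k ≃ G'.ConnectedComponent := (Fintype.equivFin _).symm
  refine ⟨k, fun i => compSub G G' hle (e i), ?_, ?_, ?_, ?_⟩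
  · intro i j hij
    exact supp_disj G' _ _ (fun h => hij (e.injective h))
  · intro i
    rw [compSub_coe]
    exact ⟨induce_supp_connected G' (e i), crit_comp G' hcrit (e i)⟩
  · apply Set.eq_univ_of_forall
    intro v
    refine Set.mem_iUnion.mpr ⟨e.symm (G'.connectedComponentMk v), ?_⟩
    show v ∈ (e (e.symm (G'.connectedComponentMk v))).supp
    rw [Equiv.apply_symm_apply]
    rfl
  · rw [← halpha, alpha_eq_sum_comp G',
      ← Equiv.sum_comp e (fun c => alpha (G'.induce c.supp))]
    exact Finset.sum_congr rfl fun i _ => by rw [compSub_coe]; rfl
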